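/- For every pair of complex numbers (t2, t4), the surface in ℂ³ defined by F(X,W,Z) = Z·(X² − 4Z²) + W² − 4·t2·Z² − 4·(t4 + t2²/8)·Z = 0 is singular, i.e. there exists a point (X,W,Z) ∈ ℂ³ with F(X,W,Z) = 0 at which all three partial derivatives of F vanish. (This is the type B₂ instance of the theorem that every fiber of the quotient deformation is singular.) -/

import Mathlib

/-- Type B₂ instance: every fiber of the quotient deformation is singular. -/
theorem stmt_0 (t2 t4 : ℂ) :
    ∃ X W Z : ℂ,
      Z * (X ^ 2 - 4 * Z ^ 2) + W ^ 2 - 4 * t2 * Z ^ 2 - 4 * (t4 + t2 ^ 2 / 8) * Z = 0 ∧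
      deriv (fun X' : ℂ =>
        Z * (X' ^ 2 - 4 * Z ^ 2) + W ^ 2 - 4 * t2 * Z ^ 2 - 4 * (t4 + t2 ^ 2 / 8) * Z) X = 0 ∧
      deriv (fun W' : ℂ =>
        Z * (X ^ 2 - 4 * Z ^ 2) + W' ^ 2 - 4 * t2 * Z ^ 2 - 4 * (t4 + t2 ^ 2 / 8) * Z) W = 0 ∧
      deriv (fun Z' : ℂ =>
        Z' * (X ^ 2 - 4 * Z' ^ 2) + W ^ 2 - 4 * t2 * Z' ^ 2 - 4 * (t4 + t2 ^ 2 / 8) * Z') Z = 0 := by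
  obtain ⟨x, hx⟩ : ∃ x : ℂ, x ^ 2 = 4 * (t4 + t2 ^ 2 / 8) := by
    obtain ⟨x, hx⟩ := IsAlgClosed.exists_pow_nat_eq (4 * (t4 + t2 ^ 2 / 8)) (n := 2) (by norm_num)
    exact ⟨x, hx⟩
  refine ⟨x, 0, 0, by ring, by simp, ?_, ?_⟩
  · have h : HasDerivAt (fun W' : ℂ => W' ^ 2) (2 * (0:ℂ) ^ 1) 0 := hasDerivAt_pow 2 0
    have H := ((h.const_add ((0:ℂ) * (x ^ 2 - 4 * (0:ℂ) ^ 2))).sub_const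
        (4 * t2 * (0:ℂ) ^ 2)).sub_const (4 * (t4 + t2 ^ 2 / 8) * (0:ℂ))
    rw [H.deriv]
    simp
  · have h1 : HasDerivAt (fun Z' : ℂ => Z' * (x ^ 2 - 4 * Z' ^ 2)) (x ^ 2) 0 := by
      have := (hasDerivAt_id (0:ℂ)).mul
        (((hasDerivAt_pow 2 (0:ℂ)).const_mul (4:ℂ)).const_sub (x ^ 2))
      simpa [Pi.mul_def] using this
    have h2 : HasDerivAt (fun Z' : ℂ => 4 * t2 * Z' ^ 2) 0 0 := by
      simpa using (hasDerivAt_pow 2 (0:ℂ)).const_mul (4 * t2)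
    have h3 : HasDerivAt (fun Z' : ℂ => 4 * (t4 + t2 ^ 2 / 8) * Z')
        (4 * (t4 + t2 ^ 2 / 8)) 0 := by
      simpa using (hasDerivAt_id (0:ℂ)).const_mul (4 * (t4 + t2 ^ 2 / 8))
    have H := ((h1.add_const ((0:ℂ) ^ 2)).sub h2).sub h3
    simp only [Pi.sub_def] at H
    rw [H.deriv, hx]
    ring
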